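/- Let n ≥ 1 and k ≥ n − 1 be integers and let t₁,…,t_n be integers with 0 ≤ t_i ≤ k for all i. Assume k + 1 divides t₁ + ⋯ + t_n + 1. For each i set T_i = t₁ + ⋯ + t_i. Then there exist integers λ₁,…,λ_n with: λ_i ∈ {0,1} for all i and λ_i = 1 whenever t_i = k; ⌊(T_i − k)/(k+1)⌋ ≤ λ₁ + ⋯ + λ_i ≤ ⌈T_i/(k+1)⌉ for i = 1,…,n−1; and λ₁ + ⋯ + λ_n = (T_n + 1)/(k+1). (This is the solvability of the auxiliary system of inequalities arising in the proof that Soc*(I) is generated in degrees < n for a PLP-polymatroidal ideal I.) -/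
import Mathlib

lemma sum_Iic_fin {M : Type*} [AddCommMonoid M] {n : ℕ} (f : Fin n → M) (i : Fin n) :
    ∑ j ∈ Finset.Iic i, f j
      = ∑ j ∈ Finset.range ((i : ℕ) + 1), (if h : j < n then f ⟨j, h⟩ else 0) := by
  refine Finset.sum_bij' (fun (j : Fin n) _ => (j : ℕ))
    (fun j hj => ⟨j, by
      have := Finset.mem_range.mp hj
      omega⟩) ?_ ?_ ?_ ?_ ?_
  · intro a ha
    simp only [Finset.mem_Iic] at ha
    simp only [Finset.mem_range]
    omega
  · intro a ha
    simp only [Finset.mem_range] at ha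
    simp only [Finset.mem_Iic, Fin.le_def]
    omega
  · intro a ha; simp
  · intro a ha; simp
  · intro a ha
    simp only [Finset.mem_Iic] at ha
    rw [dif_pos a.isLt]

/-- The auxiliary combinatorial system arising in the proof that `Soc*(I)`
is generated in degrees `< n` for a PLP-polymatroidal ideal is solvable: given
`n ≥ 1`, `k ≥ n - 1`, `0 ≤ tᵢ ≤ k` with `(k+1) ∣ t₁ + ⋯ + tₙ + 1`, there are
`λᵢ ∈ {0,1}` with `λᵢ = 1` whenever `tᵢ = k`,
`⌊(Tᵢ - k)/(k+1)⌋ ≤ λ₁ + ⋯ + λᵢ ≤ ⌈Tᵢ/(k+1)⌉` for `i = 1,…,n-1`, and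
`λ₁ + ⋯ + λₙ = (Tₙ + 1)/(k+1)`, where `Tᵢ = t₁ + ⋯ + tᵢ`. -/
theorem plp_auxiliary_system_solvable
    (n k : ℕ) (hn : 1 ≤ n) (hk : n - 1 ≤ k)
    (t : Fin n → ℕ) (ht : ∀ i, t i ≤ k)
    (hdvd : (k + 1) ∣ (∑ i, t i) + 1) :
    ∃ lam : Fin n → ℕ,
      (∀ i, lam i ≤ 1) ∧
      (∀ i, t i = k → lam i = 1) ∧
      (∀ i : Fin n, (i : ℕ) + 1 < n →
        ⌊(((∑ j ∈ Finset.Iic i, t j : ℕ) : ℚ) - (k : ℚ)) / ((k : ℚ) + 1)⌋ ≤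
            ((∑ j ∈ Finset.Iic i, lam j : ℕ) : ℤ) ∧
        ((∑ j ∈ Finset.Iic i, lam j : ℕ) : ℤ) ≤
            ⌈((∑ j ∈ Finset.Iic i, t j : ℕ) : ℚ) / ((k : ℚ) + 1)⌉) ∧
      (k + 1) * (∑ i, lam i) = (∑ i, t i) + 1 := by
  classical
  -- extended function and prefix sums
  set t' : ℕ → ℕ := fun j => (if h : j < n then t ⟨j, h⟩ else 0) + 1 with ht'
  set P : ℕ → ℕ := fun m => ∑ j ∈ Finset.range m, t' j with hP
  set G : ℕ → ℕ := fun m => P m / (k + 1) with hG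
  have hPsucc : ∀ m, P (m + 1) = P m + t' m := by
    intro m; simp [hP, Finset.sum_range_succ]
  have hGmono : Monotone G := by
    intro a b hab
    exact Nat.div_le_div_right (Finset.sum_le_sum_of_subset (Finset.range_subset_range.mpr hab))
  have hGstep : ∀ (i : Fin n), G ((i : ℕ) + 1) ≤ G (i : ℕ) + 1 := by
    intro i
    have h1 : t' (i : ℕ) ≤ k + 1 := by
      simp only [ht', dif_pos i.isLt]
      have := ht i
      simp only [Fin.eta]
      omega
    have : P ((i : ℕ) + 1) ≤ P (i : ℕ) + (k + 1) := by
      rw [hPsucc]; omega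
    calc G ((i : ℕ) + 1) ≤ (P (i : ℕ) + (k + 1)) / (k + 1) := Nat.div_le_div_right this
      _ = G (i : ℕ) + 1 := by rw [Nat.add_div_right _ (by omega)]
  refine ⟨fun i => G ((i : ℕ) + 1) - G (i : ℕ), ?_, ?_, ?_, ?_⟩
  · intro i
    show G ((i : ℕ) + 1) - G (i : ℕ) ≤ 1
    have := hGstep i
    have := hGmono (Nat.le_succ (i : ℕ))
    omega
  · intro i hti
    show G ((i : ℕ) + 1) - G (i : ℕ) = 1
    have h1 : t' (i : ℕ) = k + 1 := by
      simp only [ht', dif_pos i.isLt, Fin.eta, hti]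
    have h2 : G ((i : ℕ) + 1) = G (i : ℕ) + 1 := by
      simp only [hG]
      rw [hPsucc, h1, Nat.add_div_right _ (by omega)]
    have := hGmono (Nat.le_succ (i : ℕ))
    omega
  · intro i hi
    -- the partial sum of lam telescopes to G (i+1)
    have htel : ∑ j ∈ Finset.Iic i, (G ((j : ℕ) + 1) - G (j : ℕ)) = G ((i : ℕ) + 1) := by
      rw [sum_Iic_fin]
      have : ∀ j ∈ Finset.range ((i : ℕ) + 1),
          (if h : j < n then G (((⟨j, h⟩ : Fin n) : ℕ) + 1) - G ((⟨j, h⟩ : Fin n) : ℕ) else 0)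
            = G (j + 1) - G j := by
        intro j hj
        have hjn : j < n := by
          have := Finset.mem_range.mp hj; omega
        rw [dif_pos hjn]
      rw [Finset.sum_congr rfl this, Finset.sum_range_tsub hGmono]
      simp [hG, hP]
    -- the prefix sum of t
    have hPeq : P ((i : ℕ) + 1) = (∑ j ∈ Finset.Iic i, t j) + ((i : ℕ) + 1) := by
      simp only [hP, ht', Finset.sum_add_distrib, Finset.sum_const, Finset.card_range,
        smul_eq_mul, mul_one]
      rw [sum_Iic_fin]
    set S : ℕ := ∑ j ∈ Finset.Iic i, t j with hS
    set c : ℕ := (i : ℕ) + 1 with hc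
    have hck : c ≤ k := by omega
    have hΛ : G c = (S + c) / (k + 1) := by simp only [hG]; rw [hPeq]
    rw [htel]
    have hkpos : (0 : ℚ) < (k : ℚ) + 1 := by positivity
    constructor
    · -- floor bound
      have hlt : S + c < (G c + 1) * (k + 1) := by
        rw [hΛ, add_mul, one_mul]
        exact Nat.lt_div_mul_add (by omega)
      have : ⌊(((S : ℕ) : ℚ) - (k : ℚ)) / ((k : ℚ) + 1)⌋ < (G c : ℤ) + 1 := by
        rw [Int.floor_lt]
        rw [div_lt_iff₀ hkpos]
        have : (S : ℚ) + c < ((G c : ℚ) + 1) * ((k : ℚ) + 1) := by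
          exact_mod_cast hlt
        push_cast
        nlinarith [this, (by positivity : (0:ℚ) ≤ (c:ℚ))]
      omega
    · -- ceiling bound
      have hle : G c * (k + 1) ≤ S + c := by
        rw [hΛ]; exact Nat.div_mul_le_self _ _
      have : ((G c : ℤ) - 1) < ⌈((S : ℕ) : ℚ) / ((k : ℚ) + 1)⌉ := by
        rw [Int.lt_ceil]
        rw [lt_div_iff₀ hkpos]
        have h1 : (G c : ℚ) * ((k : ℚ) + 1) ≤ (S : ℚ) + c := by exact_mod_cast hle
        have h2 : (c : ℚ) ≤ (k : ℚ) := by exact_mod_cast hck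
        push_cast
        nlinarith
      omega
  · -- total sum
    obtain ⟨m, hm⟩ := hdvd
    have htop : (Finset.univ : Finset (Fin n)) = Finset.Iic ⟨n - 1, by omega⟩ := by
      ext j
      simp only [Finset.mem_univ, Finset.mem_Iic, true_iff, Fin.le_def]
      have := j.isLt; omega
    have htel : ∑ i : Fin n, (G ((i : ℕ) + 1) - G (i : ℕ)) = G n := by
      rw [htop, sum_Iic_fin]
      have hn1 : n - 1 + 1 = n := by omega
      have : ∀ j ∈ Finset.range (n - 1 + 1),
          (if h : j < n then G (((⟨j, h⟩ : Fin n) : ℕ) + 1) - G ((⟨j, h⟩ : Fin n) : ℕ) else 0)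
            = G (j + 1) - G j := by
        intro j hj
        have hjn : j < n := by
          have := Finset.mem_range.mp hj; omega
        rw [dif_pos hjn]
      rw [Finset.sum_congr rfl this, hn1, Finset.sum_range_tsub hGmono]
      simp [hG, hP]
    have hPn : P n = (∑ i, t i) + n := by
      simp only [hP, ht', Finset.sum_add_distrib, Finset.sum_const, Finset.card_range,
        smul_eq_mul, mul_one]
      rw [htop, sum_Iic_fin]
      have hn1 : n - 1 + 1 = n := by omega
      rw [hn1]
    have hGn : G n = m := by
      have h1 : P n = (k + 1) * m + (n - 1) := by omega
      simp only [hG]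
      rw [h1, Nat.mul_add_div (by omega), Nat.div_eq_of_lt (show n - 1 < k + 1 by omega)]
      omega
    rw [htel, hGn]
    omega
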